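/- Under the hypotheses of the main theorem (nonzero regressors x_1,…,x_N ∈ ℝⁿ, r_x = min_t ‖x_t‖₂, data y_t = x_tᵀθ° + v_t, ε ≥ 0, I_ε^0 = {t : |v_t| ≤ ε}, ℓ satisfying P1–P4 with constant α_ℓ > 0, γ > 0, α ∈ (0,1], and stability condition ρ_α(X)/(1 + e^{−γℓ(ε)}) + e^{−γℓ(ε)}·|I_ε^0|/N > 1), assume in addition that ℓ is strictly increasing on [0,∞). Then for any maximizer θ* of θ ↦ ∑_{k=1}^N exp(−γℓ(y_k − x_kᵀθ)) and any c ≥ 0 such that ℓ(c) ≥ (1/(γ·α_ℓ))·ln(1/μ_ℓ), it holds that ‖θ* − θ°‖₂ ≤ c/(α·r_x). -/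

import Mathlib

open scoped BigOperators

noncomputable section

/-- Euclidean dot product on `ℝⁿ`. -/
def dotR {n : ℕ} (u v : Fin n → ℝ) : ℝ := ∑ i, u i * v i

/-- Euclidean 2-norm on `ℝⁿ`. -/
def nrm {n : ℕ} (v : Fin n → ℝ) : ℝ := Real.sqrt (∑ i, v i ^ 2)

/-- The index set `𝓘_α(X,η) = {t : |x_tᵀη| ≥ α‖x_t‖₂‖η‖₂}`. -/
def Iset {n N : ℕ} (x : Fin N → Fin n → ℝ) (a : ℝ) (η : Fin n → ℝ) : Finset (Fin N) :=
  Finset.univ.filter fun t => a * nrm (x t) * nrm η ≤ |dotR (x t) η|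

/-- The correlation measure `ρ_α(X) = (1/N)·inf_{η ≠ 0} |𝓘_α(X,η)|`. -/
def rhoX {n N : ℕ} (x : Fin N → Fin n → ℝ) (a : ℝ) : ℝ :=
  (1 / N) * sInf ((fun η : Fin n → ℝ => ((Iset x a η).card : ℝ)) '' {η | η ≠ 0})

/-- The constant `μ` as a function of `s = e^{-γℓ(ε)}`, `q = |I_ε^0|/N` and `ρ = ρ_α(X)`. -/
def muVal (s q ρ : ℝ) : ℝ := (1 + s) / (q + ρ - 1) * (ρ / (1 + s) + s * q - 1)

lemma nrm_nonneg {n : ℕ} (v : Fin n → ℝ) : 0 ≤ nrm v := Real.sqrt_nonneg _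

lemma nrm_eq_zero {n : ℕ} (v : Fin n → ℝ) : nrm v = 0 ↔ v = 0 := by
  unfold nrm
  rw [Real.sqrt_eq_zero (by positivity)]
  constructor
  · intro h
    funext i
    have h2 := (Finset.sum_eq_zero_iff_of_nonneg (fun i _ => by positivity)).mp h i
      (Finset.mem_univ i)
    have := pow_eq_zero_iff (n := 2) (by norm_num) |>.mp h2
    simpa using this
  · intro h; simp [h]

lemma dotR_sub {n : ℕ} (u v w : Fin n → ℝ) : dotR u (v - w) = dotR u v - dotR u w := by
  unfold dotR
  rw [← Finset.sum_sub_distrib]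
  congr 1; funext i; simp [mul_sub]

set_option maxHeartbeats 1000000 in
/-- the parametric error bound under strict monotonicity of `ℓ` on `[0,∞)`. -/
theorem mce_error_bound {n N : ℕ} (hN : 0 < N)
    (x : Fin N → Fin n → ℝ) (hx : ∀ t, x t ≠ 0)
    (θo : Fin n → ℝ) (v y : Fin N → ℝ)
    (hy : ∀ t, y t = dotR (x t) θo + v t)
    (ε : ℝ) (hε : 0 ≤ ε)
    (ℓ : ℝ → ℝ) (αl : ℝ) (hαl : 0 < αl)
    (hP1 : ∀ a, 0 ≤ ℓ a) (hP1' : ∀ a, ℓ a = 0 ↔ a = 0)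
    (hP2 : ∀ a, ℓ (-a) = ℓ a)
    (hP3 : ∀ a b, |a| ≤ |b| → ℓ a ≤ ℓ b)
    (hP4 : ∀ a b, αl * ℓ a - ℓ b ≤ ℓ (a - b))
    (hmono : StrictMonoOn ℓ (Set.Ici (0 : ℝ)))
    (γ : ℝ) (hγ : 0 < γ) (a : ℝ) (ha : 0 < a) (ha1 : a ≤ 1)
    (hstab : 1 <
      rhoX x a / (1 + Real.exp (-(γ * ℓ ε))) +
        Real.exp (-(γ * ℓ ε)) *
          (((Finset.univ.filter fun t => |v t| ≤ ε).card : ℝ) / N))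
    (θs : Fin n → ℝ)
    (hmax : ∀ θ : Fin n → ℝ,
      ∑ k, Real.exp (-(γ * ℓ (y k - dotR (x k) θ))) ≤
        ∑ k, Real.exp (-(γ * ℓ (y k - dotR (x k) θs))))
    (c : ℝ) (hc : 0 ≤ c)
    (hcl : (1 / (γ * αl)) *
        Real.log (1 /
          muVal (Real.exp (-(γ * ℓ ε)))
            (((Finset.univ.filter fun t => |v t| ≤ ε).card : ℝ) / N)
            (rhoX x a)) ≤ ℓ c) :
    nrm (θs - θo) ≤ c / (a * (⨅ t, nrm (x t))) := by
  classical
  have hNR : (0:ℝ) < N := by exact_mod_cast hN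
  have hlabs : ∀ b : ℝ, ℓ b = ℓ |b| :=
    fun b => le_antisymm (hP3 b |b| (by rw [abs_abs])) (hP3 |b| b (by rw [abs_abs]))
  set s : ℝ := Real.exp (-(γ * ℓ ε)) with hs_def
  have hspos : 0 < s := by rw [hs_def]; exact Real.exp_pos _
  have hs1 : s ≤ 1 := by
    rw [hs_def, ← Real.exp_zero]
    apply Real.exp_le_exp.mpr
    have := hP1 ε; nlinarith
  -- positivity of r = min norm
  have hnrm_pos : ∀ t, 0 < nrm (x t) := by
    intro t
    rcases lt_or_eq_of_le (nrm_nonneg (x t)) with h | h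
    · exact h
    · exact absurd ((nrm_eq_zero (x t)).mp h.symm) (hx t)
  have : Nonempty (Fin N) := ⟨⟨0, hN⟩⟩
  set r : ℝ := ⨅ t, nrm (x t) with hr_def
  have hbddnrm : BddBelow (Set.range fun t => nrm (x t)) :=
    ⟨0, by rintro b ⟨t, rfl⟩; exact nrm_nonneg _⟩
  have hrle : ∀ t, r ≤ nrm (x t) := fun t => ciInf_le hbddnrm t
  have hrpos : 0 < r := by
    obtain ⟨t0, ht0⟩ := Finite.exists_min fun t => nrm (x t)
    exact lt_of_lt_of_le (hnrm_pos t0) (le_ciInf ht0)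
  by_contra hcon
  push_neg at hcon
  set η : Fin n → ℝ := θs - θo with hη_def
  have harpos : 0 < a * r := mul_pos ha hrpos
  have hηpos : 0 < nrm η := lt_of_le_of_lt (div_nonneg hc harpos.le) hcon
  have hηne : η ≠ 0 := by
    intro h
    rw [h] at hηpos
    simp [(nrm_eq_zero (0 : Fin n → ℝ)).mpr rfl] at hηpos
  have hclt : c < a * r * nrm η := by
    have := (div_lt_iff₀ harpos).mp hcon
    linarith
  -- index sets
  set I0 : Finset (Fin N) := Finset.univ.filter (fun t => |v t| ≤ ε) with hI0_def
  set P : ℕ := (Iset x a η).card with hP_def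
  set Q : ℕ := I0.card with hQ_def
  set M : Finset (Fin N) := Iset x a η ∩ I0 with hM_def
  set m : ℕ := M.card with hm_def
  set ρ : ℝ := rhoX x a with hρ_def
  set qr : ℝ := (Q : ℝ) / N with hqr_def
  -- facts about rho
  set S : Set ℝ := ((fun η : Fin n → ℝ => ((Iset x a η).card : ℝ)) '' {η | η ≠ 0}) with hS_def
  have hmemS : ((P : ℕ) : ℝ) ∈ S := ⟨η, hηne, rfl⟩
  have hbddS : BddBelow S := ⟨0, by rintro b ⟨w, _, rfl⟩; exact Nat.cast_nonneg _⟩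
  have hSinf_le : sInf S ≤ (P : ℝ) := csInf_le hbddS hmemS
  have hSinf_nonneg : 0 ≤ sInf S :=
    le_csInf ⟨_, hmemS⟩ (by rintro b ⟨w, _, rfl⟩; exact Nat.cast_nonneg _)
  have hρ_eq : ρ = (1 / N) * sInf S := rfl
  have hρP : (N : ℝ) * ρ ≤ P := by
    rw [hρ_eq]
    calc (N : ℝ) * ((1 / N) * sInf S) = sInf S := by field_simp
    _ ≤ P := hSinf_le
  have hρ0 : 0 ≤ ρ := by
    rw [hρ_eq]; positivity
  have hPN : (P : ℝ) ≤ N := by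
    exact_mod_cast Finset.card_le_card (Finset.subset_univ _) |>.trans
      (le_of_eq (Finset.card_univ.trans (Fintype.card_fin N)))
  have hρ1 : ρ ≤ 1 := by
    have := hρP.trans hPN
    nlinarith
  have hQN : (Q : ℝ) ≤ N := by
    exact_mod_cast Finset.card_le_card (Finset.subset_univ _) |>.trans
      (le_of_eq (Finset.card_univ.trans (Fintype.card_fin N)))
  have hqr0 : 0 ≤ qr := by rw [hqr_def]; exact div_nonneg (Nat.cast_nonneg _) hNR.le
  have hqr1 : qr ≤ 1 := by rw [hqr_def, div_le_one hNR]; exact hQN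
  have hNqr : (N : ℝ) * qr = Q := by rw [hqr_def]; field_simp
  -- stability restated
  have hstab' : 1 < ρ / (1 + s) + s * qr := hstab
  have hstabpos : 0 < ρ / (1 + s) + s * qr - 1 := by linarith
  have hD : 0 < qr + ρ - 1 := by
    have hsq : s * qr ≤ qr := mul_le_of_le_one_left hqr0 hs1
    have h1 : ρ / (1 + s) ≤ ρ := div_le_self hρ0 (by linarith)
    linarith
  -- mu facts
  set μ : ℝ := muVal s qr ρ with hμ_def
  have hμpos : 0 < μ := by
    rw [hμ_def]; unfold muVal
    apply mul_pos (div_pos (by linarith) hD) hstabpos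
  have hμD : μ * (qr + ρ - 1) = ρ + s * qr * (1 + s) - (1 + s) := by
    rw [hμ_def]; unfold muVal
    field_simp
  set E : ℝ := Real.exp (-(γ * (αl * ℓ c))) with hE_def
  clear_value s r η I0 P Q M m ρ qr S μ E
  have hμs : μ ≤ s := by
    have hA : 0 ≤ (1 - ρ) * (1 - s) :=
      mul_nonneg (sub_nonneg.mpr hρ1) (sub_nonneg.mpr hs1)
    have hsqr1 : s * qr ≤ 1 := mul_le_one₀ hs1 hqr0 hqr1
    have hB : 0 ≤ s * (1 - s * qr) :=
      mul_nonneg hspos.le (sub_nonneg.mpr hsqr1)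
    have key : μ * (qr + ρ - 1) ≤ s * (qr + ρ - 1) := by
      rw [hμD]; nlinarith [hA, hB]
    exact le_of_mul_le_mul_right (by linarith [key]) hD
  have hEμ : E ≤ μ := by
    have hγαl : 0 < γ * αl := mul_pos hγ hαl
    have h1 : Real.log (1 / μ) ≤ γ * αl * ℓ c := by
      rw [div_mul_eq_mul_div, div_le_iff₀ hγαl] at hcl
      nlinarith [hcl]
    have h2 : -(γ * (αl * ℓ c)) ≤ Real.log μ := by
      rw [Real.log_div one_ne_zero hμpos.ne', Real.log_one] at h1
      linarith [h1]
    rw [hE_def]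
    calc Real.exp (-(γ * (αl * ℓ c))) ≤ Real.exp (Real.log μ) := Real.exp_le_exp.mpr h2
    _ = μ := Real.exp_log hμpos
  -- cardinality bounds
  have hPQm : (P : ℝ) + Q ≤ N + m := by
    have h1 := Finset.card_union_add_card_inter (Iset x a η) I0
    have h2 : ((Iset x a η) ∪ I0).card ≤ N := by
      exact (Finset.card_le_card (Finset.subset_univ _)).trans
        (le_of_eq (Finset.card_univ.trans (Fintype.card_fin N)))
    have h3 : P + Q ≤ N + m := by
      rw [hP_def, hQ_def, hm_def, hM_def]; omega
    exact_mod_cast h3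
  have hmge : (N : ℝ) * (qr + ρ - 1) ≤ m := by
    have : (N : ℝ) * qr + (N : ℝ) * ρ - N ≤ m := by
      rw [hNqr]; linarith
    nlinarith
  have hmpos : 0 < m := by
    by_contra hm0
    push_neg at hm0
    interval_cases m
    · simp only [Nat.cast_zero] at hmge
      nlinarith
  have hMne : M.Nonempty := by
    have h := hmpos
    rw [hm_def] at h
    exact Finset.card_pos.mp h
  have hmN : (m : ℝ) ≤ N := by
    rw [hm_def]
    exact_mod_cast Finset.card_le_card (Finset.subset_univ _) |>.trans
      (le_of_eq (Finset.card_univ.trans (Fintype.card_fin N)))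
  -- lower bound on objective at θo
  have hJo : (Q : ℝ) * s ≤ ∑ k, Real.exp (-(γ * ℓ (y k - dotR (x k) θo))) := by
    have hres : ∀ k, y k - dotR (x k) θo = v k := by
      intro k; rw [hy k]; ring
    calc (Q : ℝ) * s = ∑ _t ∈ I0, s := by
          rw [Finset.sum_const, nsmul_eq_mul, hQ_def]
    _ ≤ ∑ t ∈ I0, Real.exp (-(γ * ℓ (v t))) := by
          apply Finset.sum_le_sum
          intro t ht
          rw [hI0_def, Finset.mem_filter] at ht
          have hlv : ℓ (v t) ≤ ℓ ε := hP3 (v t) ε (by rw [abs_of_nonneg hε]; exact ht.2)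
          rw [hs_def]
          exact Real.exp_le_exp.mpr (by nlinarith)
    _ ≤ ∑ t, Real.exp (-(γ * ℓ (v t))) :=
          Finset.sum_le_sum_of_subset_of_nonneg (Finset.subset_univ _)
            (fun t _ _ => (Real.exp_pos _).le)
    _ = ∑ k, Real.exp (-(γ * ℓ (y k - dotR (x k) θo))) := by
          simp only [hres]
  -- upper bound on objective at θs
  have hJs : ∑ k, Real.exp (-(γ * ℓ (y k - dotR (x k) θs))) <
      (m : ℝ) * (E / s) + ((N : ℝ) - m) := by
    have hres : ∀ k, y k - dotR (x k) θs = v k - dotR (x k) η := by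
      intro k
      rw [hy k, hη_def, dotR_sub]
      ring
    have hterm : ∀ t ∈ M,
        Real.exp (-(γ * ℓ (y t - dotR (x t) θs))) < E / s := by
      intro t ht
      rw [hM_def, Finset.mem_inter] at ht
      obtain ⟨htI, htI0⟩ := ht
      simp only [Iset, Finset.mem_filter] at htI
      rw [hI0_def, Finset.mem_filter] at htI0
      have hdot : c < |dotR (x t) η| := by
        have h1 : a * r * nrm η ≤ a * nrm (x t) * nrm η :=
          mul_le_mul_of_nonneg_right
            (mul_le_mul_of_nonneg_left (hrle t) ha.le) (nrm_nonneg η)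
        linarith [htI.2]
      have hlc : ℓ c < ℓ (dotR (x t) η) := by
        rw [hlabs (dotR (x t) η)]
        exact hmono (Set.mem_Ici.mpr hc) (Set.mem_Ici.mpr (abs_nonneg _)) hdot
      have hlv : ℓ (v t) ≤ ℓ ε := hP3 (v t) ε (by rw [abs_of_nonneg hε]; exact htI0.2)
      have hP4' := hP4 (dotR (x t) η) (v t)
      have hflip : ℓ (v t - dotR (x t) η) = ℓ (dotR (x t) η - v t) := by
        rw [← hP2 (dotR (x t) η - v t)]; ring_nf
      have hmul : αl * ℓ c < αl * ℓ (dotR (x t) η) :=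
        mul_lt_mul_of_pos_left hlc hαl
      have hlres : αl * ℓ c - ℓ ε < ℓ (y t - dotR (x t) θs) := by
        rw [hres t, hflip]
        linarith
      have hmul2 : γ * (αl * ℓ c - ℓ ε) < γ * ℓ (y t - dotR (x t) θs) :=
        mul_lt_mul_of_pos_left hlres hγ
      have hstep : Real.exp (-(γ * ℓ (y t - dotR (x t) θs))) <
          Real.exp (-(γ * (αl * ℓ c - ℓ ε))) :=
        Real.exp_lt_exp.mpr (by linarith)
      calc Real.exp (-(γ * ℓ (y t - dotR (x t) θs)))
          < Real.exp (-(γ * (αl * ℓ c - ℓ ε))) := hstep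
      _ = E / s := by
          rw [hE_def, hs_def, ← Real.exp_sub]
          congr 1
          ring
    have hsum1 : ∑ t ∈ M, Real.exp (-(γ * ℓ (y t - dotR (x t) θs))) <
        (m : ℝ) * (E / s) := by
      calc ∑ t ∈ M, Real.exp (-(γ * ℓ (y t - dotR (x t) θs)))
          < ∑ _t ∈ M, (E / s) := Finset.sum_lt_sum_of_nonempty hMne hterm
      _ = (m : ℝ) * (E / s) := by rw [Finset.sum_const, nsmul_eq_mul, hm_def]
    have hsum2 : ∑ t ∈ Mᶜ, Real.exp (-(γ * ℓ (y t - dotR (x t) θs))) ≤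
        (N : ℝ) - m := by
      calc ∑ t ∈ Mᶜ, Real.exp (-(γ * ℓ (y t - dotR (x t) θs)))
          ≤ ∑ _t ∈ Mᶜ, (1 : ℝ) := by
            apply Finset.sum_le_sum
            intro t _
            rw [← Real.exp_zero]
            apply Real.exp_le_exp.mpr
            have h0 := hP1 (y t - dotR (x t) θs)
            nlinarith
      _ = (Mᶜ.card : ℝ) := by rw [Finset.sum_const, nsmul_eq_mul, mul_one]
      _ = (N : ℝ) - m := by
            rw [Finset.card_compl, Fintype.card_fin, hm_def]
            have hmN' : M.card ≤ N := by rw [← hm_def]; exact_mod_cast hmN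
            rw [Nat.cast_sub hmN']
    calc ∑ k, Real.exp (-(γ * ℓ (y k - dotR (x k) θs)))
        = ∑ t ∈ M, Real.exp (-(γ * ℓ (y t - dotR (x t) θs))) +
          ∑ t ∈ Mᶜ, Real.exp (-(γ * ℓ (y t - dotR (x t) θs))) :=
          (Finset.sum_add_sum_compl M _).symm
    _ < (m : ℝ) * (E / s) + ((N : ℝ) - m) := by linarith
  -- combine
  have hchain : (Q : ℝ) * s < (m : ℝ) * (E / s) + ((N : ℝ) - m) :=
    lt_of_le_of_lt (hJo.trans (hmax θo)) hJs
  -- final contradiction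
  have hchain2 : (Q : ℝ) * s * s < (m : ℝ) * E + ((N : ℝ) - m) * s := by
    have := mul_lt_mul_of_pos_right hchain hspos
    calc (Q : ℝ) * s * s < ((m : ℝ) * (E / s) + ((N : ℝ) - m)) * s := this
    _ = (m : ℝ) * E + ((N : ℝ) - m) * s := by field_simp
  have hmE : (m : ℝ) * E ≤ (m : ℝ) * μ :=
    mul_le_mul_of_nonneg_left hEμ (Nat.cast_nonneg m)
  have hmμs : (m : ℝ) * (μ - s) ≤ (N : ℝ) * (qr + ρ - 1) * (μ - s) :=
    mul_le_mul_of_nonpos_right hmge (by linarith)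
  -- Q*s*s < m*μ + (N-m)*s = m*(μ-s) + N*s ≤ N*(qr+ρ-1)*(μ-s) + N*s
  have hfin : (Q : ℝ) * s * s < (N : ℝ) * (qr + ρ - 1) * (μ - s) + (N : ℝ) * s := by
    linarith [hchain2, hmE, hmμs]
  -- but N*(qr+ρ-1)*(μ-s) + N*s = Q*s*s + N*(ρ-1)*(1-s) ≤ Q*s*s
  have hexp : (N : ℝ) * (qr + ρ - 1) * (μ - s) + (N : ℝ) * s =
      (Q : ℝ) * s * s + (N : ℝ) * (ρ - 1) * (1 - s) := by
    have h1 : (N : ℝ) * ((qr + ρ - 1) * μ) = (N : ℝ) * (ρ + s * qr * (1 + s) - (1 + s)) := by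
      rw [mul_comm (qr + ρ - 1) μ, hμD]
    have h2 : (N : ℝ) * qr * s * s = (Q : ℝ) * s * s := by rw [hNqr]
    have h3 : (N : ℝ) * qr * s = (Q : ℝ) * s := by rw [hNqr]
    linarith [h1, h2, h3]
  rw [hexp] at hfin
  linarith [hfin, mul_nonneg (mul_nonneg hNR.le (sub_nonneg.mpr hρ1)) (sub_nonneg.mpr hs1)]
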